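/- For every integer s with 0 ≤ s ≤ 2n − 2, the polynomial (x − s/2)^{f(d,s)} divides det(M_d) in ℚ[x] (where det(M_d) is regarded as an element of ℚ[x] via the inclusion ℤ[x] ⊂ ℚ[x]). -/

import Mathlib

open Finset Polynomial

namespace Capelli

/-- The set `ℙ_{k,n}` of pairs `μ = (μ₁, μ₂)` of nonnegative integers with `μ₁ ≥ μ₂`,
`μ₁ + μ₂ = k` and `μ₂ ≤ n`. -/
def Pkn (n k : ℕ) : Finset (ℕ × ℕ) :=
  (Finset.range (k + 1) ×ˢ Finset.range (k + 1)).filter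
    (fun μ => μ.2 ≤ μ.1 ∧ μ.1 + μ.2 = k ∧ μ.2 ≤ n)

/-- The set `ℙ*_{k,n}` of pairs `ν = (ν₁, ν₂)` of nonnegative integers with `ν₁ ≥ ν₂`,
`ν₁ + ν₂ = k` and `ν₂ ≥ ⌊k/2⌋ - n` (written here additively to avoid truncated subtraction). -/
def PknStar (n k : ℕ) : Finset (ℕ × ℕ) :=
  (Finset.range (k + 1) ×ˢ Finset.range (k + 1)).filter
    (fun ν => ν.2 ≤ ν.1 ∧ ν.1 + ν.2 = k ∧ k / 2 ≤ ν.2 + n)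

/-- `Λ_{d,n} = ⋃_{k=0}^d ℙ_{k,n}`. -/
def Lam (n d : ℕ) : Finset (ℕ × ℕ) := (Finset.range (d + 1)).biUnion (Pkn n)

/-- `Λ*_{d,n} = ⋃_{k=0}^d ℙ*_{k,n}`. -/
def LamStar (n d : ℕ) : Finset (ℕ × ℕ) := (Finset.range (d + 1)).biUnion (PknStar n)

/-- `ℓ_ν = min(ν₁ - ν₂, 2n + 1 - (ν₁ - ν₂))`. -/
def ell (n : ℕ) (ν : ℕ × ℕ) : ℕ := min (ν.1 - ν.2) (2 * n + 1 - (ν.1 - ν.2))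

/-- `Λ_{d,n,j} = {μ ∈ Λ_{d,n} : μ₂ ≥ j}`. -/
def Lamj (n d j : ℕ) : Finset (ℕ × ℕ) := (Lam n d).filter (fun μ => j ≤ μ.2)

/-- `Λ*_{d,n,j} = {ν ∈ Λ*_{d,n} : ν₂ ≤ ⌊|ν|/2⌋ - j}`. -/
def LamStarj (n d j : ℕ) : Finset (ℕ × ℕ) :=
  (LamStar n d).filter (fun ν => ν.2 + j ≤ (ν.1 + ν.2) / 2)

/-- `ν_{(j)} = (|ν| - ⌊|ν|/2⌋ + j, ⌊|ν|/2⌋ - j)`. -/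
def nuSub (ν : ℕ × ℕ) (j : ℕ) : ℕ × ℕ :=
  (ν.1 + ν.2 - (ν.1 + ν.2) / 2 + j, (ν.1 + ν.2) / 2 - j)

/-- The polynomial `λ_{μ,ν}(x) = ((2x+1)ℓ_ν - ℓ_ν²)^{μ₂} (ν₁+ν₂)^{μ₁-μ₂} ∈ ℤ[x]`. -/
noncomputable def lamPoly (n : ℕ) (μ ν : ℕ × ℕ) : Polynomial ℤ :=
  ((2 * X + 1) * C (ell n ν : ℤ) - C ((ell n ν : ℤ) ^ 2)) ^ μ.2 *
    C ((ν.1 + ν.2 : ℕ) : ℤ) ^ (μ.1 - μ.2)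

/-- The row ordering: `μ ⪯ μ'` iff `μ₂ < μ₂'`, or `μ₂ = μ₂'` and `μ₁ ≤ μ₁'`. -/
def rowRel (μ μ' : ℕ × ℕ) : Prop := μ.2 < μ'.2 ∨ (μ.2 = μ'.2 ∧ μ.1 ≤ μ'.1)

/-- The column ordering: `ν ⩽ ν'` iff `⌊(ν₁-ν₂)/2⌋ < ⌊(ν₁'-ν₂')/2⌋`, or these are equal and
`|ν| ≤ |ν'|`.  (A further tie-break by the first coordinate is added so that the relation is
antisymmetric on all of `ℕ × ℕ`; on `Λ*_{d,n}` a tie in the first two comparisons forces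
equality, so this agrees with the ordering of the paper there.) -/
def colRel (ν ν' : ℕ × ℕ) : Prop :=
  (ν.1 - ν.2) / 2 < (ν'.1 - ν'.2) / 2 ∨
    ((ν.1 - ν.2) / 2 = (ν'.1 - ν'.2) / 2 ∧
      (ν.1 + ν.2 < ν'.1 + ν'.2 ∨ (ν.1 + ν.2 = ν'.1 + ν'.2 ∧ ν.1 ≤ ν'.1)))

instance : DecidableRel rowRel := fun a b =>
  inferInstanceAs (Decidable (a.2 < b.2 ∨ (a.2 = b.2 ∧ a.1 ≤ b.1)))

instance : IsTrans (ℕ × ℕ) rowRel := ⟨by intro a b c; unfold rowRel; omega⟩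

instance : IsTotal (ℕ × ℕ) rowRel := ⟨by intro a b; unfold rowRel; omega⟩

instance : IsAntisymm (ℕ × ℕ) rowRel :=
  ⟨by intro a b h1 h2; unfold rowRel at h1 h2; rw [Prod.ext_iff]; omega⟩

instance : DecidableRel colRel := fun a b =>
  inferInstanceAs (Decidable ((a.1 - a.2) / 2 < (b.1 - b.2) / 2 ∨
    ((a.1 - a.2) / 2 = (b.1 - b.2) / 2 ∧
      (a.1 + a.2 < b.1 + b.2 ∨ (a.1 + a.2 = b.1 + b.2 ∧ a.1 ≤ b.1)))))

instance : IsTrans (ℕ × ℕ) colRel := ⟨by intro a b c; unfold colRel; omega⟩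

instance : IsTotal (ℕ × ℕ) colRel := ⟨by intro a b; unfold colRel; omega⟩

instance : IsAntisymm (ℕ × ℕ) colRel :=
  ⟨by intro a b h1 h2; unfold colRel at h1 h2; rw [Prod.ext_iff]; omega⟩

/-- The elements of `Λ_{d,n}` listed in increasing order for `⪯`. -/
def rowList (n d : ℕ) : List (ℕ × ℕ) := (Lam n d).sort rowRel

/-- The elements of `Λ*_{d,n}` listed in increasing order for `⩽`. -/
def colList (n d : ℕ) : List (ℕ × ℕ) := (LamStar n d).sort colRel

/-- The elements of `Λ_{d,n,j}` listed in increasing order for `⪯`. -/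
def rowListJ (n d j : ℕ) : List (ℕ × ℕ) := (Lamj n d j).sort rowRel

/-- The elements of `Λ*_{d,n,j}` listed in increasing order for `⩽`. -/
def colListJ (n d j : ℕ) : List (ℕ × ℕ) := (LamStarj n d j).sort colRel

/-- The matrix `M_d = [λ_{μ,ν}]` with rows indexed by `Λ_{d,n}` (ordered by `⪯`) and columns
indexed by `Λ*_{d,n}` (ordered by `⩽`); since `|Λ_{d,n}| = |Λ*_{d,n}|` the column list has
length `(Lam n d).card` and the `getD` access below always hits an actual entry. -/
noncomputable def Md (n d : ℕ) : Matrix (Fin (Lam n d).card) (Fin (Lam n d).card) (Polynomial ℤ) :=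
  fun i j => lamPoly n ((rowList n d).getD i.val (0, 0)) ((colList n d).getD j.val (0, 0))

/-- The matrix `M_d' = [(2ℓ_ν)^{μ₂}(ν₁+ν₂)^{μ₁-μ₂}]` of leading coefficients. -/
def Md' (n d : ℕ) : Matrix (Fin (Lam n d).card) (Fin (Lam n d).card) ℤ :=
  fun i j =>
    let μ := (rowList n d).getD i.val (0, 0)
    let ν := (colList n d).getD j.val (0, 0)
    (2 * (ell n ν : ℤ)) ^ μ.2 * ((ν.1 + ν.2 : ℕ) : ℤ) ^ (μ.1 - μ.2)

/-- `S_{μ,ν,j}` with `m = μ₂ - j`: the complete homogeneous symmetric polynomial of degree `m`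
evaluated at `ℓ_{ν_{(0)}}, …, ℓ_{ν_{(j-1)}}, ℓ_ν`, i.e. the sum over all `(j+1)`-tuples
`(a₀, …, a_j)` of nonnegative integers with `a₀ + ⋯ + a_j = m` of
`ℓ_{ν_{(0)}}^{a₀} ⋯ ℓ_{ν_{(j-1)}}^{a_{j-1}} ℓ_ν^{a_j}`. -/
def Shs (n : ℕ) (ν : ℕ × ℕ) (j m : ℕ) : ℕ :=
  ∑ a ∈ Finset.Nat.antidiagonalTuple (j + 1) m,
    ∏ i : Fin (j + 1), (if (i : ℕ) < j then ell n (nuSub ν (i : ℕ)) else ell n ν) ^ a i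

/-- The matrix `N_j = [2^{μ₂-j}(ν₁+ν₂)^{μ₁-μ₂} S_{μ,ν,j}]` with rows indexed by `Λ_{d,n,j}`
(ordered by `⪯`) and columns indexed by `Λ*_{d,n,j}` (ordered by `⩽`). -/
def Ndj (n d j : ℕ) : Matrix (Fin (Lamj n d j).card) (Fin (Lamj n d j).card) ℤ :=
  fun i i' =>
    let μ := (rowListJ n d j).getD i.val (0, 0)
    let ν := (colListJ n d j).getD i'.val (0, 0)
    2 ^ (μ.2 - j) * ((ν.1 + ν.2 : ℕ) : ℤ) ^ (μ.1 - μ.2) * (Shs n ν j (μ.2 - j) : ℤ)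

/-- The Vandermonde matrix `V(a, a+1, …, a+s-1) = [(a+j)^{i-1}]_{1 ≤ i,j ≤ s}` (0-indexed
as `[(a+j)^i]_{0 ≤ i,j ≤ s-1}`), with the convention `0⁰ = 1`. -/
def vandInt (a s : ℕ) : Matrix (Fin s) (Fin s) ℤ :=
  fun i j => ((a + (j : ℕ) : ℕ) : ℤ) ^ (i : ℕ)

/-- `f(d,s) = #{(ν,ν') ∈ Λ*_{d,n} × Λ*_{d,n} : |ν| = |ν'|, ℓ_{ν'} < ℓ_ν, ℓ_ν + ℓ_{ν'} - 1 = s}`. -/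
def fds (n d : ℕ) (s : ℤ) : ℕ :=
  (((LamStar n d) ×ˢ (LamStar n d)).filter
    (fun p => p.1.1 + p.1.2 = p.2.1 + p.2.2 ∧ ell n p.2 < ell n p.1 ∧
      (ell n p.1 : ℤ) + (ell n p.2 : ℤ) - 1 = s)).card

/-- `g_k(s) = #{(ν,ν') ∈ ℙ*_{k,n} × ℙ*_{k,n} : ℓ_{ν'} < ℓ_ν, ℓ_ν + ℓ_{ν'} - 1 = s}`. -/
def gks (n k : ℕ) (s : ℤ) : ℕ :=
  ((PknStar n k ×ˢ PknStar n k).filter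
    (fun p => ell n p.2 < ell n p.1 ∧ (ell n p.1 : ℤ) + (ell n p.2 : ℤ) - 1 = s)).card


lemma card_Pkn_star (n k : ℕ) : (Pkn n k).card = (PknStar n k).card := by
  apply Finset.card_nbij' (i := fun μ => (k - (k / 2 - μ.2), k / 2 - μ.2))
    (j := fun ν => (k - (k / 2 - ν.2), k / 2 - ν.2)) <;>
  · intro a ha
    simp only [Pkn, PknStar, Finset.mem_coe, Finset.mem_filter, Finset.mem_product, Finset.mem_range] at ha ⊢
    first
    | omega
    | (rw [Prod.ext_iff]; constructor <;> simp <;> omega)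

lemma card_LamStar (n d : ℕ) : (LamStar n d).card = (Lam n d).card := by
  rw [Lam, LamStar, Finset.card_biUnion, Finset.card_biUnion]
  · exact Finset.sum_congr rfl fun k _ => (card_Pkn_star n k).symm
  · intro x _ y _ hxy
    rw [Function.onFun, Finset.disjoint_left]
    intro a ha hb
    simp only [Pkn, Finset.mem_filter, Finset.mem_product, Finset.mem_range] at ha hb
    omega
  · intro x _ y _ hxy
    rw [Function.onFun, Finset.disjoint_left]
    intro a ha hb
    simp only [PknStar, Finset.mem_filter, Finset.mem_product, Finset.mem_range] at ha hb
    omega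

lemma mem_LamStar_props {n d : ℕ} {ν : ℕ × ℕ} (h : ν ∈ LamStar n d) :
    ν.2 ≤ ν.1 ∧ (ν.1 + ν.2) / 2 ≤ ν.2 + n := by
  simp only [LamStar, Finset.mem_biUnion, PknStar, Finset.mem_filter, Finset.mem_product,
    Finset.mem_range] at h
  obtain ⟨k, -, -, h1, h2, h3⟩ := h
  omega

lemma ell_injOn (n : ℕ) {ν ν' : ℕ × ℕ} (h1 : ν.2 ≤ ν.1) (h2 : (ν.1 + ν.2) / 2 ≤ ν.2 + n)
    (h1' : ν'.2 ≤ ν'.1) (h2' : (ν'.1 + ν'.2) / 2 ≤ ν'.2 + n)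
    (hsum : ν.1 + ν.2 = ν'.1 + ν'.2) (hell : ell n ν = ell n ν') : ν = ν' := by
  rw [Prod.ext_iff]
  unfold ell at hell
  omega

lemma pow_dvd_det_of_pairs {R : Type*} [CommRing R] {N : ℕ} (q : R) :
    ∀ (L : List (Fin N × Fin N)) (A : Matrix (Fin N) (Fin N) R),
      (∀ p ∈ L, p.1 ≠ p.2) →
      L.Pairwise (fun p p' => p.1 ≠ p'.1 ∧ p.1 ≠ p'.2) →
      (∀ p ∈ L, ∀ i, q ∣ (A i p.1 - A i p.2)) →
      q ^ L.length ∣ A.det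
  | [], A, _, _, _ => by simp
  | p :: L, A, hne, hpw, hdvd => by
    classical
    choose w hw using fun i => hdvd p List.mem_cons_self i
    obtain ⟨hhead, htail⟩ := List.pairwise_cons.mp hpw
    have hdetA : (A.updateCol p.1 fun i => q * w i).det = A.det := by
      have h2 := Matrix.det_updateCol_add_smul_self A
        (hne p List.mem_cons_self) (-1 : R)
      rw [← h2]
      apply congrArg Matrix.det
      apply congrArg (A.updateCol p.1)
      funext i
      rw [← hw i]
      simp [smul_eq_mul, sub_eq_add_neg]
    have hsmul : (A.updateCol p.1 fun i => q * w i).det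
        = q * (A.updateCol p.1 w).det := by
      exact Matrix.det_updateCol_smul A p.1 q w
    have hrec := pow_dvd_det_of_pairs q L (A.updateCol p.1 w)
      (fun p' hp' => hne p' (List.mem_cons_of_mem _ hp'))
      htail
      (fun p' hp' i => by
        have h1 : p.1 ≠ p'.1 := (hhead p' hp').1
        have h2 : p.1 ≠ p'.2 := (hhead p' hp').2
        rw [Matrix.updateCol_ne (Ne.symm h1), Matrix.updateCol_ne (Ne.symm h2)]
        exact hdvd p' (List.mem_cons_of_mem _ hp') i)
    rw [List.length_cons, pow_succ, ← hdetA, hsmul, mul_comm q]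
    exact mul_dvd_mul hrec dvd_rfl

lemma lamPoly_map (n : ℕ) (μ ρ : ℕ × ℕ) :
    (lamPoly n μ ρ).map (Int.castRingHom ℚ) =
      ((2 * X + 1) * C ((ell n ρ : ℚ)) - C ((ell n ρ : ℚ) ^ 2)) ^ μ.2 *
        C (((ρ.1 + ρ.2 : ℕ) : ℚ)) ^ (μ.1 - μ.2) := by
  unfold lamPoly
  simp [Polynomial.map_mul, Polynomial.map_pow, Polynomial.map_sub, Polynomial.map_add,
    Polynomial.map_ofNat, Polynomial.map_one, Polynomial.map_C, Polynomial.map_X]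

lemma key_dvd (n : ℕ) (s : ℤ) (μ ν ν' : ℕ × ℕ)
    (hk : ν.1 + ν.2 = ν'.1 + ν'.2)
    (hsum : (ell n ν : ℤ) + (ell n ν' : ℤ) - 1 = s) :
    (X - C ((s : ℚ) / 2)) ∣
      ((lamPoly n μ ν).map (Int.castRingHom ℚ) - (lamPoly n μ ν').map (Int.castRingHom ℚ)) := by
  rw [lamPoly_map, lamPoly_map, hk, ← sub_mul]
  apply Dvd.dvd.mul_right
  set a : ℚ := (ell n ν : ℚ)
  set b : ℚ := (ell n ν' : ℚ)
  have hab : a + b = (s : ℚ) + 1 := by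
    have : ((ell n ν : ℤ) : ℚ) + ((ell n ν' : ℤ) : ℚ) - 1 = ((s : ℤ) : ℚ) := by
      exact_mod_cast congrArg (fun z : ℤ => (z : ℚ)) hsum
    push_cast at this ⊢
    linarith
  refine dvd_trans ?_ (sub_dvd_pow_sub_pow _ _ μ.2)
  rw [Polynomial.dvd_iff_isRoot]
  simp only [Polynomial.IsRoot, Polynomial.eval_sub, Polynomial.eval_mul, Polynomial.eval_add,
    Polynomial.eval_ofNat, Polynomial.eval_one, Polynomial.eval_C, Polynomial.eval_X,
    Polynomial.eval_pow]
  linear_combination (b - a) * hab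

/-- For every integer `s` with `0 ≤ s ≤ 2n - 2`, the polynomial
`(x - s/2)^{f(d,s)}` divides `det(M_d)` in `ℚ[x]`. -/
theorem root_dvd_det_Md (n d : ℕ) (s : ℤ) (hs0 : 0 ≤ s) (hs : s ≤ 2 * (n : ℤ) - 2) :
    (X - C ((s : ℚ) / 2)) ^ fds n d s ∣ (Md n d).det.map (Int.castRingHom ℚ) := by
  classical
  letI : BEq (ℕ × ℕ) := instBEqOfDecidableEq
  set q : Polynomial ℚ := X - C ((s : ℚ) / 2) with hq
  let A : Matrix (Fin (Lam n d).card) (Fin (Lam n d).card) (Polynomial ℚ) :=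
    fun i j => (Md n d i j).map (Int.castRingHom ℚ)
  have hdet : (Md n d).det.map (Int.castRingHom ℚ) = A.det := by
    have h := RingHom.map_det (Polynomial.mapRingHom (Int.castRingHom ℚ)) (Md n d)
    exact h
  rw [hdet]
  have hlen : (colList n d).length = (Lam n d).card := by
    rw [colList, Finset.length_sort, card_LamStar]
  have hmemcol : ∀ ν : ℕ × ℕ, ν ∈ LamStar n d → ν ∈ colList n d := by
    intro ν hν; exact (Finset.mem_sort _).mpr hν
  have hidx : ∀ ν ∈ LamStar n d, (colList n d).idxOf ν < (Lam n d).card := by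
    intro ν hν; rw [← hlen]; exact List.idxOf_lt_length_iff.mpr (hmemcol ν hν)
  have hinj : ∀ ν ∈ LamStar n d, ∀ ν' ∈ LamStar n d,
      (colList n d).idxOf ν = (colList n d).idxOf ν' → ν = ν' := by
    intro ν hν ν' hν' h
    exact (List.idxOf_inj (hmemcol ν hν)).mp h
  have hgetD : ∀ ν ∈ LamStar n d,
      (colList n d).getD ((colList n d).idxOf ν) (0, 0) = ν := by
    intro ν hν
    have h1 : (colList n d).idxOf ν < (colList n d).length :=
      List.idxOf_lt_length_iff.mpr (hmemcol ν hν)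
    rw [List.getD_eq_getElem _ _ h1, List.getElem_idxOf]
  set P := (((LamStar n d) ×ˢ (LamStar n d)).filter
    (fun p => p.1.1 + p.1.2 = p.2.1 + p.2.2 ∧ ell n p.2 < ell n p.1 ∧
      (ell n p.1 : ℤ) + (ell n p.2 : ℤ) - 1 = s)) with hP
  have hPmem : ∀ p ∈ P, p.1 ∈ LamStar n d ∧ p.2 ∈ LamStar n d ∧
      p.1.1 + p.1.2 = p.2.1 + p.2.2 ∧ ell n p.2 < ell n p.1 ∧
      (ell n p.1 : ℤ) + (ell n p.2 : ℤ) - 1 = s := by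
    intro p hp
    rw [hP, Finset.mem_filter, Finset.mem_product] at hp
    tauto
  have hmatch : ∀ p ∈ P, ∀ p' ∈ P, (p.1 = p'.1 ∨ p.1 = p'.2) → p = p' := by
    intro p hp p' hp' hcase
    obtain ⟨h1, h2, h3, h4, h5⟩ := hPmem p hp
    obtain ⟨h1', h2', h3', h4', h5'⟩ := hPmem p' hp'
    obtain ⟨hb1, hb2⟩ := mem_LamStar_props h2
    obtain ⟨ha1', ha2'⟩ := mem_LamStar_props h1'
    obtain ⟨hb1', hb2'⟩ := mem_LamStar_props h2'
    rcases hcase with hc | hc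
    · have hsum2 : p.2.1 + p.2.2 = p'.2.1 + p'.2.2 := by rw [← h3, ← h3', hc]
      have hee : ell n p.1 = ell n p'.1 := by rw [hc]
      have hell : ell n p.2 = ell n p'.2 := by omega
      have := ell_injOn n hb1 hb2 hb1' hb2' hsum2 hell
      rw [Prod.ext_iff]; exact ⟨hc, this⟩
    · exfalso
      have hsum2 : p.2.1 + p.2.2 = p'.1.1 + p'.1.2 := by rw [← h3, hc, h3']
      have hee : ell n p.1 = ell n p'.2 := by rw [hc]
      have hell : ell n p.2 = ell n p'.1 := by omega
      have heq := ell_injOn n hb1 hb2 ha1' ha2' hsum2 hell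
      rw [heq] at hell
      omega
  let g : {p // p ∈ P.toList} → Fin (Lam n d).card × Fin (Lam n d).card := fun p =>
    (⟨(colList n d).idxOf p.1.1, hidx _ (hPmem p.1 (Finset.mem_toList.mp p.2)).1⟩,
     ⟨(colList n d).idxOf p.1.2, hidx _ (hPmem p.1 (Finset.mem_toList.mp p.2)).2.1⟩)
  let L := P.toList.attach.map g
  have hlenL : L.length = fds n d s := by
    simp only [L, List.length_map, List.length_attach, Finset.length_toList]
    rfl
  have hL1 : ∀ pp ∈ L, pp.1 ≠ pp.2 := by
    intro pp hpp
    obtain ⟨⟨p, hpl⟩, -, rfl⟩ := List.mem_map.mp hpp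
    have hp : p ∈ P := Finset.mem_toList.mp hpl
    obtain ⟨h1, h2, h3, h4, h5⟩ := hPmem p hp
    intro hcon
    have hidxeq : (colList n d).idxOf p.1 = (colList n d).idxOf p.2 :=
      congrArg Fin.val hcon
    have := hinj p.1 h1 p.2 h2 hidxeq
    rw [this] at h4
    omega
  have hL2 : L.Pairwise (fun pp pp' => pp.1 ≠ pp'.1 ∧ pp.1 ≠ pp'.2) := by
    rw [List.pairwise_map]
    have hnodup : List.Pairwise (· ≠ ·) P.toList.attach :=
      (List.nodup_attach.mpr P.nodup_toList)
    refine hnodup.imp ?_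
    intro x y hxy
    have hx : x.1 ∈ P := Finset.mem_toList.mp x.2
    have hy : y.1 ∈ P := Finset.mem_toList.mp y.2
    constructor
    · intro hcon
      have hidxeq : (colList n d).idxOf x.1.1 = (colList n d).idxOf y.1.1 :=
        congrArg Fin.val hcon
      have := hinj x.1.1 (hPmem x.1 hx).1 y.1.1 (hPmem y.1 hy).1 hidxeq
      exact hxy (Subtype.ext (hmatch x.1 hx y.1 hy (Or.inl this)))
    · intro hcon
      have hidxeq : (colList n d).idxOf x.1.1 = (colList n d).idxOf y.1.2 :=
        congrArg Fin.val hcon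
      have := hinj x.1.1 (hPmem x.1 hx).1 y.1.2 (hPmem y.1 hy).2.1 hidxeq
      exact hxy (Subtype.ext (hmatch x.1 hx y.1 hy (Or.inr this)))
  have hL3 : ∀ pp ∈ L, ∀ i, q ∣ (A i pp.1 - A i pp.2) := by
    intro pp hpp i
    obtain ⟨⟨p, hpl⟩, -, rfl⟩ := List.mem_map.mp hpp
    have hp : p ∈ P := Finset.mem_toList.mp hpl
    obtain ⟨h1, h2, h3, h4, h5⟩ := hPmem p hp
    have e1 : A i (g ⟨p, hpl⟩).1 =
        (lamPoly n ((rowList n d).getD i.val (0, 0)) p.1).map (Int.castRingHom ℚ) := by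
      show ((Md n d i (g ⟨p, hpl⟩).1).map (Int.castRingHom ℚ)) = _
      rw [Md]
      show (lamPoly n _ ((colList n d).getD ((colList n d).idxOf p.1) (0, 0))).map _ = _
      rw [hgetD p.1 h1]
    have e2 : A i (g ⟨p, hpl⟩).2 =
        (lamPoly n ((rowList n d).getD i.val (0, 0)) p.2).map (Int.castRingHom ℚ) := by
      show ((Md n d i (g ⟨p, hpl⟩).2).map (Int.castRingHom ℚ)) = _
      rw [Md]
      show (lamPoly n _ ((colList n d).getD ((colList n d).idxOf p.2) (0, 0))).map _ = _
      rw [hgetD p.2 h2]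
    rw [e1, e2, hq]
    exact key_dvd n s _ p.1 p.2 h3 h5
  have hmain := pow_dvd_det_of_pairs q L A hL1 hL2 hL3
  rwa [hlenL] at hmain


end Capelli
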